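/- Let ξ_{n,i} be defined by ξ_{0,0} = 1, ξ_{0,i} = 0 for i ≠ 0, and ξ_{n+1,i} = (1+2n−6i)·ξ_{n,i} + (n−2i+2)·ξ_{n,i−1} − 4(i+1)·ξ_{n,i+1}, and set ξ_n(x) = Σ_{i=0}^{⌊n/2⌋} ξ_{n,i} x^i. Then for every n ≥ 0 and every real x ≠ 0, ξ_n(x²−1) = xⁿ · Q_n(1/x), where Q_n is the n-th derivative polynomial for secant. -/

import Mathlib

open Finset

/-- Signed permutations of order `n` (the hyperoctahedral group), modeled as a
permutation of `Fin n` together with a sign for each position. -/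
abbrev BSigned (n : ℕ) := Equiv.Perm (Fin n) × (Fin n → Bool)

/-- The word of a signed permutation: `bword σ j = σ(j)` for `1 ≤ j ≤ n`,
with the convention `σ(0) = 0`. -/
def bword {n : ℕ} (σ : BSigned n) (j : ℕ) : ℤ :=
  if h : 1 ≤ j ∧ j ≤ n then
    (if σ.2 ⟨j - 1, by omega⟩ then -1 else 1) * ((σ.1 ⟨j - 1, by omega⟩ : ℕ) + 1)
  else 0

/-- The number of alternating descents of a signed permutation: the number of
`0 ≤ j ≤ n-1` such that `j` is even and `σ(j) < σ(j+1)`, or `j` is odd and `σ(j) > σ(j+1)`. -/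
def altdesB {n : ℕ} (σ : BSigned n) : ℕ :=
  ((Finset.range n).filter (fun j => (Even j ∧ bword σ j < bword σ (j + 1)) ∨
      (Odd j ∧ bword σ (j + 1) < bword σ j))).card

/-- The type B alternating Eulerian number `B̂(n,k)`. -/
def Bhat (n k : ℕ) : ℕ :=
  (Finset.univ.filter (fun σ : BSigned n => altdesB σ = k)).card

/-- The type B alternating Eulerian polynomial `B̂_n(x)` as a real function. -/
noncomputable def Bpoly (n : ℕ) (x : ℝ) : ℝ :=
  ∑ σ : BSigned n, x ^ altdesB σ

/-- The word of a permutation of `{1,…,n}`: `aword π j = π(j)` for `1 ≤ j ≤ n`,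
with the convention `π(0) = 0`. -/
def aword {n : ℕ} (π : Equiv.Perm (Fin n)) (j : ℕ) : ℕ :=
  if h : 1 ≤ j ∧ j ≤ n then (π ⟨j - 1, by omega⟩ : ℕ) + 1 else 0

/-- The number of alternating descents of a permutation: the number of
`1 ≤ j ≤ n-1` such that `j` is odd and `π(j) > π(j+1)`, or `j` is even and `π(j) < π(j+1)`. -/
def altdesA {n : ℕ} (π : Equiv.Perm (Fin n)) : ℕ :=
  ((Finset.Icc 1 (n - 1)).filter (fun j => (Odd j ∧ aword π (j + 1) < aword π j) ∨
      (Even j ∧ aword π j < aword π (j + 1)))).card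

/-- The type A alternating Eulerian number `Â(n,k)`. -/
def Ahat (n k : ℕ) : ℕ :=
  (Finset.univ.filter (fun π : Equiv.Perm (Fin n) => altdesA π = k)).card

/-- The type A alternating Eulerian polynomial `Â_n(x)` as a real function. -/
noncomputable def Apoly (n : ℕ) (x : ℝ) : ℝ :=
  ∑ π : Equiv.Perm (Fin n), x ^ altdesA π

/-- The number of left peaks of a permutation: indices `1 ≤ i ≤ n-1` with
`π(i-1) < π(i) > π(i+1)`, where `π(0) = 0`. -/
def lpk {n : ℕ} (π : Equiv.Perm (Fin n)) : ℕ :=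
  ((Finset.Icc 1 (n - 1)).filter (fun i =>
      aword π (i - 1) < aword π i ∧ aword π (i + 1) < aword π i)).card

/-- `M n k` is the number of permutations of `{1,…,n}` with exactly `k` left peaks. -/
def M (n k : ℕ) : ℕ :=
  (Finset.univ.filter (fun π : Equiv.Perm (Fin n) => lpk π = k)).card

/-- The derivative polynomials for secant: `Q 0 = 1`,
`Q (n+1) = x Q n + (1+x²) (Q n)'`. -/
noncomputable def Q : ℕ → Polynomial ℝ
  | 0 => 1
  | n + 1 => Polynomial.X * Q n + (1 + Polynomial.X ^ 2) * Polynomial.derivative (Q n)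

/-- The coefficients `ξ_{n,i}` (terms with negative index vanish). -/
def xi : ℕ → ℤ → ℤ
  | 0, i => if i = 0 then 1 else 0
  | n + 1, i => (1 + 2 * (n : ℤ) - 6 * i) * xi n i + ((n : ℤ) - 2 * i + 2) * xi n (i - 1)
      - 4 * (i + 1) * xi n (i + 1)

/-- The polynomial `ξ_n(x) = Σ_{i=0}^{⌊n/2⌋} ξ_{n,i} x^i` as a real function. -/
noncomputable def xiPoly (n : ℕ) (x : ℝ) : ℝ :=
  ∑ i ∈ Finset.range (n / 2 + 1), (xi n i : ℝ) * x ^ i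

/-- A snake: a signed permutation with `σ(0) < σ(1) > σ(2) < σ(3) > ⋯`. -/
def IsSnake {n : ℕ} (σ : BSigned n) : Prop :=
  ∀ i : ℕ, (2 * i + 1 ≤ n → bword σ (2 * i) < bword σ (2 * i + 1)) ∧
    (2 * i + 2 ≤ n → bword σ (2 * i + 2) < bword σ (2 * i + 1))

/-- The Springer number `s_n`: the number of snakes of order `n`. -/
noncomputable def springer (n : ℕ) : ℕ := Nat.card {σ : BSigned n // IsSnake σ}

/-- An alternating (down-up) permutation: `π(1) > π(2) < π(3) > ⋯`. -/
def IsAlternating {m : ℕ} (π : Equiv.Perm (Fin m)) : Prop :=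
  ∀ j : ℕ, 1 ≤ j → j + 1 ≤ m →
    (Odd j → aword π (j + 1) < aword π j) ∧ (Even j → aword π j < aword π (j + 1))

/-- The secant number `E_{2n}`: the number of alternating permutations of `{1,…,2n}`. -/
noncomputable def secantNumber (n : ℕ) : ℕ :=
  Nat.card {π : Equiv.Perm (Fin (2 * n)) // IsAlternating π}

open Polynomial

noncomputable def Zp (n : ℕ) : Polynomial ℝ :=
  ∑ i ∈ Finset.range (n + 1), C ((xi n i : ℤ) : ℝ) * X ^ i

lemma xi_neg (n : ℕ) : ∀ i : ℤ, i < 0 → xi n i = 0 := by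
  induction n with
  | zero => intro i hi; simp [xi]; omega
  | succ n ih =>
    intro i hi
    rw [xi]
    rcases eq_or_lt_of_le (show i ≤ -1 by omega) with h | h
    · subst h; rw [ih (-1:ℤ) hi, ih ((-1:ℤ)-1) (by omega)]
      ring
    · rw [ih i hi, ih (i-1) (by omega), ih (i+1) (by omega)]
      ring

lemma xi_big (n : ℕ) : ∀ i : ℤ, (n : ℤ) < 2 * i → xi n i = 0 := by
  induction n with
  | zero => intro i hi; simp [xi]; omega
  | succ n ih =>
    intro i hi
    push_cast at hi
    rw [xi]
    rw [ih i (by omega), ih (i+1) (by omega)]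
    rcases eq_or_lt_of_le (show (n:ℤ) + 2 ≤ 2 * i by omega) with h | h
    · have : (n : ℤ) - 2*i + 2 = 0 := by omega
      rw [this]; ring
    · rw [ih (i-1) (by omega)]; ring

lemma Zp_coeff (n : ℕ) (k : ℕ) : (Zp n).coeff k = ((xi n k : ℤ) : ℝ) := by
  rw [Zp, finset_sum_coeff]
  simp only [coeff_C_mul, coeff_X_pow, mul_ite, mul_one, mul_zero]
  rw [Finset.sum_ite_eq (Finset.range (n+1)) k]
  split_ifs with h
  · rfl
  · rw [Finset.mem_range, not_lt] at h
    rw [xi_big n k (by exact_mod_cast by omega)]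
    simp

lemma Zp_rec (n : ℕ) : Zp (n + 1) =
    C ((1:ℝ) + 2 * n) * Zp n + C (n:ℝ) * (X * Zp n)
      - C (2:ℝ) * (X ^ 2 * derivative (Zp n)) - C (6:ℝ) * (X * derivative (Zp n))
      - C (4:ℝ) * derivative (Zp n) := by
  ext k
  simp only [coeff_sub, coeff_add, coeff_C_mul, Zp_coeff]
  match k with
  | 0 =>
    simp only [mul_coeff_zero, coeff_X_zero, zero_mul, coeff_derivative, Zp_coeff,
      coeff_X_pow]
    rw [show ((0:ℕ):ℤ) = (0:ℤ) from rfl, xi,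
      show (0:ℤ) - 1 = -1 by norm_num, xi_neg n (-1) (by omega)]
    norm_num
  | 1 =>
    have h2 : ((X:ℝ[X]) ^ 2 * derivative (Zp n)).coeff 1 = 0 := by
      rw [coeff_X_pow_mul']
      simp
    rw [h2, coeff_X_mul, coeff_X_mul]
    simp only [coeff_derivative, Zp_coeff]
    rw [show ((1:ℕ):ℤ) = (1:ℤ) from rfl, xi]
    push_cast
    ring
  | (k + 2) =>
    rw [coeff_X_pow_mul (derivative (Zp n)) 2 k, coeff_X_mul, coeff_X_mul]
    simp only [coeff_derivative, Zp_coeff]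
    rw [show ((k + 2 : ℕ) : ℤ) = ((k:ℤ) + 1) + 1 by push_cast; ring, xi]
    push_cast
    ring

lemma main (n : ℕ) : ∀ x : ℝ, x ≠ 0 → (Zp n).eval (x ^ 2 - 1) = x ^ n * (Q n).eval (1 / x) := by
  induction n with
  | zero => intro x hx; simp [Zp, Q, xi]
  | succ n ih =>
    intro x hx
    -- derivative comparison
    have hF : ∀ y : ℝ, HasDerivAt (fun y : ℝ => (Zp n).eval (y ^ 2 - 1))
        ((derivative (Zp n)).eval (y ^ 2 - 1) * (2 * y)) y := by
      intro y
      have h1 : HasDerivAt (fun y : ℝ => y ^ 2 - 1) (2 * y) y := by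
        simpa using ((hasDerivAt_pow 2 y).sub_const 1)
      exact ((Zp n).hasDerivAt (y ^ 2 - 1)).comp y h1
    have hG : HasDerivAt (fun y : ℝ => y ^ n * (Q n).eval (1 / y))
        ((n : ℝ) * x ^ (n - 1) * (Q n).eval (1 / x)
          + x ^ n * ((derivative (Q n)).eval (1 / x) * (-(x ^ 2)⁻¹))) x := by
      have h1 : HasDerivAt (fun y : ℝ => (Q n).eval (1 / y))
          ((derivative (Q n)).eval (1 / x) * (-(x ^ 2)⁻¹)) x := by
        simpa [one_div, Function.comp_def] using ((Q n).hasDerivAt (x⁻¹)).comp x (hasDerivAt_inv hx)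
      exact (hasDerivAt_pow n x).mul h1
    have hEq : deriv (fun y : ℝ => (Zp n).eval (y ^ 2 - 1)) x
        = deriv (fun y : ℝ => y ^ n * (Q n).eval (1 / y)) x := by
      apply Filter.EventuallyEq.deriv_eq
      filter_upwards [eventually_ne_nhds hx] with y hy
      exact ih y hy
    have key : (derivative (Zp n)).eval (x ^ 2 - 1) * (2 * x)
        = (n : ℝ) * x ^ (n - 1) * (Q n).eval (1 / x)
          + x ^ n * ((derivative (Q n)).eval (1 / x) * (-(x ^ 2)⁻¹)) := by
      rw [← (hF x).deriv, hEq, hG.deriv]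
    have hpow : (n : ℝ) * x ^ (n - 1) = n * x ^ n / x := by
      cases n with
      | zero => simp
      | succ m => rw [pow_succ]; field_simp; ring_nf; simp
    rw [Zp_rec]
    simp only [Polynomial.eval_sub, Polynomial.eval_add, Polynomial.eval_mul, Polynomial.eval_C,
      Polynomial.eval_X, Polynomial.eval_pow]
    rw [ih x hx]
    rw [show Q (n + 1) = Polynomial.X * Q n + (1 + Polynomial.X ^ 2) * Polynomial.derivative (Q n)
      from rfl]
    simp only [Polynomial.eval_add, Polynomial.eval_mul, Polynomial.eval_X, Polynomial.eval_one,
      Polynomial.eval_pow]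
    rw [hpow] at key
    set A := (Q n).eval (1 / x)
    set B := (derivative (Q n)).eval (1 / x)
    set D := (derivative (Zp n)).eval (x ^ 2 - 1)
    have hD : D = ((n : ℝ) * x ^ n / x * A + x ^ n * (B * (-(x ^ 2)⁻¹))) / (2 * x) := by
      field_simp at key ⊢
      linarith [key]
    rw [hD]
    field_simp
    ring

lemma xiPoly_eq (n : ℕ) (y : ℝ) : xiPoly n y = (Zp n).eval y := by
  rw [Zp, Polynomial.eval_finset_sum]
  simp only [Polynomial.eval_mul, Polynomial.eval_C, Polynomial.eval_pow, Polynomial.eval_X]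
  rw [xiPoly]
  apply Finset.sum_subset
  · intro i hi
    simp only [Finset.mem_range] at hi ⊢
    omega
  · intro i _ hi
    simp only [Finset.mem_range, not_lt] at hi
    rw [xi_big n i (by exact_mod_cast by omega)]
    simp

/-- `ξ_n(x²-1) = xⁿ Q_n(1/x)` for `x ≠ 0`, where `Q_n` is the
`n`-th derivative polynomial for secant. -/
theorem stmt13 (n : ℕ) (x : ℝ) (hx : x ≠ 0) :
    xiPoly n (x ^ 2 - 1) = x ^ n * (Q n).eval (1 / x) := by
  rw [xiPoly_eq]
  exact main n x hx
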